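/- Backward direction of the single-forbidden-edge lemma: if f_s is a stable flow on D_s (D plus terminal s and edge sv ranked by v just better than the forbidden edge uv) with f_s(sv) = 0, then f_s(uv) = 0, and the restriction of f_s to D (deleting edge sv) is a stable flow on D avoiding uv. -/

import Mathlib

/-- A flow network: directed edges `E` over vertices `V`, capacities, a set `S`
of terminals, and for each vertex a rank of its incident edges
(lower rank = more preferred). -/
structure FlowNet (V E : Type) where
  src : E → V
  dst : E → V
  cap : E → ℚ
  S : Set V
  rk : V → E → ℚ

variable {V E : Type}

/-- Total flow leaving `v`. -/
def outflow [Fintype E] [DecidableEq V] (N : FlowNet V E) (f : E → ℚ) (v : V) : ℚ :=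
  ∑ e : E, if N.src e = v then f e else 0

/-- Total flow entering `v`. -/
def inflow [Fintype E] [DecidableEq V] (N : FlowNet V E) (f : E → ℚ) (v : V) : ℚ :=
  ∑ e : E, if N.dst e = v then f e else 0

/-- Feasible flow: capacity constraints, and conservation at non-terminals. -/
def Feasible [Fintype E] [DecidableEq V] (N : FlowNet V E) (f : E → ℚ) : Prop :=
  (∀ e, 0 ≤ f e ∧ f e ≤ N.cap e) ∧
  (∀ v, v ∉ N.S → outflow N f v = inflow N f v)

/-- A (nonempty) directed walk, given as the list of its edges. -/
def IsWalk (N : FlowNet V E) (l : List E) : Prop :=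
  l ≠ [] ∧ l.Chain' (fun e e' => N.dst e = N.src e')

/-- The first edge `e` of a walk dominates `f` at its start: the start vertex is
a terminal, or some outgoing edge worse than `e` carries positive flow. -/
def DomAtStart (N : FlowNet V E) (f : E → ℚ) (e : E) : Prop :=
  N.src e ∈ N.S ∨
    ∃ e', N.src e' = N.src e ∧ 0 < f e' ∧ N.rk (N.src e) e < N.rk (N.src e) e'

/-- The last edge `e` of a walk dominates `f` at its end: the end vertex is a
terminal, or some incoming edge worse than `e` carries positive flow. -/
def DomAtEnd (N : FlowNet V E) (f : E → ℚ) (e : E) : Prop :=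
  N.dst e ∈ N.S ∨
    ∃ e', N.dst e' = N.dst e ∧ 0 < f e' ∧ N.rk (N.dst e) e < N.rk (N.dst e) e'

/-- A blocking walk: a directed walk of unsaturated edges dominating `f` at both ends. -/
def IsBlockingWalk (N : FlowNet V E) (f : E → ℚ) (l : List E) : Prop :=
  IsWalk N l ∧ (∀ e ∈ l, f e < N.cap e) ∧
  ∃ h : l ≠ [], DomAtStart N f (l.head h) ∧ DomAtEnd N f (l.getLast h)

/-- A stable flow: a feasible flow admitting no blocking walk. -/
def IsStableFlow [Fintype E] [DecidableEq V] (N : FlowNet V E) (f : E → ℚ) : Prop :=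
  Feasible N f ∧ ∀ l : List E, ¬ IsBlockingWalk N f l

/-- `D_s`: add a new terminal `s = inr ()` and an edge `sv = inr ()` of
capacity `γ` from `s` to `v = dst e0`, ranked `ρ` by `v`. -/
def addSrc (N : FlowNet V E) (e0 : E) (γ ρ : ℚ) :
    FlowNet (V ⊕ Unit) (E ⊕ Unit) where
  src x := match x with
    | Sum.inl e => Sum.inl (N.src e)
    | Sum.inr _ => Sum.inr ()
  dst x := match x with
    | Sum.inl e => Sum.inl (N.dst e)
    | Sum.inr _ => Sum.inl (N.dst e0)
  cap x := match x with
    | Sum.inl e => N.cap e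
    | Sum.inr _ => γ
  S := (Sum.inl '' N.S) ∪ {Sum.inr ()}
  rk x y := match x, y with
    | Sum.inl v, Sum.inl e => N.rk v e
    | Sum.inl _, Sum.inr _ => ρ
    | Sum.inr _, _ => 0

/-- Backward direction of the single-forbidden-edge lemma: if `f_s` is a
stable flow on `D_s` with `f_s(sv) = 0`, then `f_s(uv) = 0` and the
restriction of `f_s` to `D` is a stable flow on `D` avoiding `uv`. -/
theorem forbidden_edge_backward {V E : Type}
    [Fintype E] [DecidableEq V]
    (N : FlowNet V E) (e0 : E) (γ : ℚ) (hγ : 0 < γ)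
    (ρ : ℚ) (hρ1 : ρ < N.rk (N.dst e0) e0)
    (hρ2 : ∀ e, N.rk (N.dst e0) e < N.rk (N.dst e0) e0 →
      N.rk (N.dst e0) e < ρ)
    (fs : (E ⊕ Unit) → ℚ) (hfs : IsStableFlow (addSrc N e0 γ ρ) fs)
    (hsv : fs (Sum.inr ()) = 0) :
    fs (Sum.inl e0) = 0 ∧ IsStableFlow N (fun e => fs (Sum.inl e)) := by

  obtain ⟨⟨hcap, hcons⟩, hstab⟩ := hfs
  have he0 : fs (Sum.inl e0) = 0 := by
    by_contra h
    have hpos : 0 < fs (Sum.inl e0) := lt_of_le_of_ne (hcap (Sum.inl e0)).1 (Ne.symm h)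
    apply hstab [Sum.inr ()]
    refine ⟨⟨by simp, List.isChain_singleton _⟩, ?_, ?_⟩
    · intro e he
      simp only [List.mem_singleton] at he
      subst he
      simpa [addSrc, hsv] using hγ
    · refine ⟨by simp, ?_, ?_⟩
      · left
        right
        rfl
      · right
        exact ⟨Sum.inl e0, rfl, hpos, hρ1⟩
  refine ⟨he0, ⟨⟨fun e => hcap (Sum.inl e), ?_⟩, ?_⟩⟩
  · intro v hv
    have hv' : (Sum.inl v : V ⊕ Unit) ∉ (addSrc N e0 γ ρ).S := by
      intro hmem
      rcases hmem with ⟨w, hw, hweq⟩ | hmem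
      · exact hv (Sum.inl.inj hweq ▸ hw)
      · simp at hmem
    have := hcons (Sum.inl v) hv'
    simpa [outflow, inflow, addSrc, Fintype.sum_sum_type, hsv] using this
  · intro l hl
    obtain ⟨⟨hne, hchain⟩, hunsat, hne', hds, hde⟩ := hl
    apply hstab (l.map (Sum.inl : E → E ⊕ Unit))
    refine ⟨⟨by simpa using hne, ?_⟩, ?_, ?_⟩
    · show List.IsChain _ _
      rw [List.isChain_map]
      exact List.IsChain.imp (fun a b h => by simp [addSrc, h]) hchain
    · intro e he
      simp only [List.mem_map] at he
      obtain ⟨e', he', rfl⟩ := he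
      exact hunsat e' he'
    · have hmne : l.map (Sum.inl : E → E ⊕ Unit) ≠ [] := by simpa using hne
      refine ⟨hmne, ?_, ?_⟩
      · have hh : (l.map (Sum.inl : E → E ⊕ Unit)).head hmne = Sum.inl (l.head hne) := by
          cases l with
          | nil => exact absurd rfl hne
          | cons a t => rfl
        rw [hh]
        rcases hds with hS | ⟨e', h1, h2, h3⟩
        · left; left; exact ⟨_, hS, rfl⟩
        · right
          exact ⟨Sum.inl e', by simp [addSrc, h1], h2, by simpa [addSrc] using h3⟩
      · have hh : (l.map (Sum.inl : E → E ⊕ Unit)).getLast hmne = Sum.inl (l.getLast hne) := by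
          rw [List.getLast_map]
        rw [hh]
        rcases hde with hS | ⟨e', h1, h2, h3⟩
        · left; left; exact ⟨_, hS, rfl⟩
        · right
          exact ⟨Sum.inl e', by simp [addSrc, h1], h2, by simpa [addSrc] using h3⟩
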